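/- Let Q be an n×n real symmetric positive definite matrix, let A be an m×n real matrix of full row rank (A is surjective), and let B be a p×n real matrix whose row space satisfies Range(Bᵀ) = Ker(A). Then ℝⁿ is the internal direct sum of the subspace Ker(B) of continuous fields and the subspace Ker(A·Q) of balanced fields: every x ∈ ℝⁿ can be written in a unique way as x = x_c + x_e with B x_c = 0 and A Q x_e = 0. -/

import Mathlib

open Matrix

/-- If `Q` is symmetric positive definite, `A` has full row rank
(surjective), and `Range(Bᵀ) = Ker(A)`, then every vector `x` splits in a unique
way as `x = x_c + x_e` with `B x_c = 0` (continuous) and `A Q x_e = 0` (balanced). -/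
theorem stmt_3 {n m p : Type*} [Fintype n] [Fintype m] [Fintype p]
    [DecidableEq n] [DecidableEq m] [DecidableEq p]
    (Q : Matrix n n ℝ) (A : Matrix m n ℝ) (B : Matrix p n ℝ)
    (hQsym : Qᵀ = Q) (hQ : Q.PosDef)
    (hA : Function.Surjective A.mulVec)
    (hB : LinearMap.range Bᵀ.mulVecLin = LinearMap.ker A.mulVecLin) :
    ∀ x : n → ℝ, ∃! pair : (n → ℝ) × (n → ℝ),
      B *ᵥ pair.1 = 0 ∧ (A * Q) *ᵥ pair.2 = 0 ∧ x = pair.1 + pair.2 := by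
  -- Aᵀ has trivial kernel
  have hAT : ∀ y : m → ℝ, Aᵀ *ᵥ y = 0 → y = 0 := by
    intro y hy
    have h0 : y ⬝ᵥ y = 0 := by
      obtain ⟨z, hz⟩ := hA y
      calc y ⬝ᵥ y = (A *ᵥ z) ⬝ᵥ y := by rw [hz]
        _ = z ⬝ᵥ (Aᵀ *ᵥ y) := by
            rw [dotProduct_comm, dotProduct_mulVec, mulVec_transpose, dotProduct_comm]
        _ = 0 := by rw [hy, dotProduct_zero]
    exact dotProduct_self_eq_zero.mp h0
  -- M := A Q Aᵀ is positive definite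
  set M : Matrix m m ℝ := A * Q * Aᵀ with hMdef
  have hMsym : Mᵀ = M := by
    simp [hMdef, Matrix.transpose_mul, hQsym, Matrix.mul_assoc]
  have hM : M.PosDef := by
    refine Matrix.PosDef.of_dotProduct_mulVec_pos (by simpa [Matrix.IsHermitian] using hMsym) (fun y hy => ?_)
    have hAy : Aᵀ *ᵥ y ≠ 0 := fun h => hy (hAT y h)
    have h1 := hQ.dotProduct_mulVec_pos hAy
    have heq : star y ⬝ᵥ M *ᵥ y = star (Aᵀ *ᵥ y) ⬝ᵥ Q *ᵥ (Aᵀ *ᵥ y) := by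
      simp only [star_trivial, hMdef]
      rw [← mulVec_mulVec, ← mulVec_mulVec, dotProduct_mulVec (R := ℝ) y A,
        ← mulVec_transpose]
    rw [heq]
    exact h1
  haveI := hM.isUnit.invertible
  have hinv : A * Q * Aᵀ * M⁻¹ = 1 := Matrix.mul_inv_of_invertible M
  -- A * Bᵀ = 0
  have hABt : A * Bᵀ = 0 := by
    ext i j
    have hmem : Bᵀ *ᵥ Pi.single j 1 ∈ LinearMap.range Bᵀ.mulVecLin :=
      ⟨Pi.single j 1, rfl⟩
    rw [hB, LinearMap.mem_ker] at hmem
    have : A *ᵥ (Bᵀ *ᵥ Pi.single j 1) = 0 := hmem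
    rw [mulVec_mulVec, mulVec_single] at this
    simpa using congrFun this i
  have hBAt : B * Aᵀ = 0 := by
    have := congrArg Matrix.transpose hABt
    simpa [Matrix.transpose_mul] using this
  -- key: if B d = 0 and A Q d = 0 then d = 0
  have hkey : ∀ d : n → ℝ, B *ᵥ d = 0 → (A * Q) *ᵥ d = 0 → d = 0 := by
    intro d hBd hAQd
    by_contra hd
    have hQd : Q *ᵥ d ∈ LinearMap.range Bᵀ.mulVecLin := by
      rw [hB, LinearMap.mem_ker]
      simpa [mulVec_mulVec] using hAQd
    obtain ⟨v, hv⟩ := hQd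
    have h0 : d ⬝ᵥ (Q *ᵥ d) = 0 := by
      rw [← hv]
      show d ⬝ᵥ (Bᵀ *ᵥ v) = 0
      rw [dotProduct_mulVec, vecMul_transpose, hBd, zero_dotProduct]
    exact absurd h0 (ne_of_gt (by simpa [star_trivial] using hQ.dotProduct_mulVec_pos hd))
  intro x
  have hc' : B *ᵥ (Aᵀ *ᵥ (M⁻¹ *ᵥ (A *ᵥ (Q *ᵥ x)))) = 0 := by
    simp [mulVec_mulVec, ← Matrix.mul_assoc, hBAt]
  have he' : (A * Q) *ᵥ (x - Aᵀ *ᵥ (M⁻¹ *ᵥ (A *ᵥ (Q *ᵥ x)))) = 0 := by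
    rw [mulVec_sub, mulVec_mulVec, mulVec_mulVec, mulVec_mulVec, mulVec_mulVec,
      hinv, Matrix.one_mul, sub_self]
  refine ⟨⟨Aᵀ *ᵥ (M⁻¹ *ᵥ (A *ᵥ (Q *ᵥ x))), x - Aᵀ *ᵥ (M⁻¹ *ᵥ (A *ᵥ (Q *ᵥ x)))⟩,
    ⟨hc', he', by simp⟩, ?_⟩
  rintro ⟨c, e⟩ ⟨hc, he, hx⟩
  have hd : c - Aᵀ *ᵥ (M⁻¹ *ᵥ (A *ᵥ (Q *ᵥ x))) = 0 := by
    apply hkey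
    · rw [mulVec_sub, hc, hc', sub_self]
    · have hdiff : c - Aᵀ *ᵥ (M⁻¹ *ᵥ (A *ᵥ (Q *ᵥ x)))
          = (x - Aᵀ *ᵥ (M⁻¹ *ᵥ (A *ᵥ (Q *ᵥ x)))) - e := by
        rw [hx]; show c - _ = (c + e - _) - e; abel
      rw [hdiff, mulVec_sub, he', he, sub_self]
  have h1 : c = Aᵀ *ᵥ (M⁻¹ *ᵥ (A *ᵥ (Q *ᵥ x))) := sub_eq_zero.mp hd
  refine Prod.ext ?_ ?_
  · simpa using h1
  · show e = x - Aᵀ *ᵥ (M⁻¹ *ᵥ (A *ᵥ (Q *ᵥ x)))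
    rw [← h1, hx]; show e = c + e - c; abel
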